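/- Let A ∈ ℝ^{n×n}, ε ∈ (0,1), and Ã = A + D with ‖D‖_2 ≤ (ε/(3n))·σ_{k+1}(A). Let Q ∈ ℝ^{n×k} have orthonormal columns q_1,…,q_k. If for some i ∈ {1,…,k} it holds that |q_iᵀÃÃᵀq_i − σ_i(Ã)²| ≤ ε·σ_{k+1}(Ã)², then |q_iᵀAAᵀq_i − σ_i(A)²| ≤ 8ε·σ_i(A)². -/
import Mathlib


open MeasureTheory ProbabilityTheory Matrix

noncomputable section

/-- Euclidean (ℓ₂) norm of a vector. -/
def l2norm {n : ℕ} (v : Fin n → ℝ) : ℝ := Real.sqrt (∑ i, v i ^ 2)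

/-- Spectral (ℓ₂ operator) norm of a matrix. -/
def specNorm {n d : ℕ} (M : Matrix (Fin n) (Fin d) ℝ) : ℝ :=
  sSup {c : ℝ | ∃ v : Fin d → ℝ, l2norm v ≤ 1 ∧ c = l2norm (M.mulVec v)}

/-- Frobenius norm of a matrix. -/
def frobNorm {n d : ℕ} (M : Matrix (Fin n) (Fin d) ℝ) : ℝ :=
  Real.sqrt (∑ i, ∑ j, M i j ^ 2)

/-- Column span of a matrix. -/
def colSpan {n : ℕ} {m : Type*} (M : Matrix (Fin n) m ℝ) : Submodule ℝ (Fin n → ℝ) :=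
  Submodule.span ℝ (Set.range fun j i => M i j)

/-- `IsSVD A U V σ` : `A = U Σ Vᵀ` is a singular value decomposition of `A`, where
`σ 0 ≥ σ 1 ≥ … ≥ 0` are the singular values (0-indexed, `σ i = 0` for `i ≥ min n d`). -/
def IsSVD {n d : ℕ} (A : Matrix (Fin n) (Fin d) ℝ) (U : Matrix (Fin n) (Fin n) ℝ)
    (V : Matrix (Fin d) (Fin d) ℝ) (σ : ℕ → ℝ) : Prop :=
  Uᵀ * U = 1 ∧ Vᵀ * V = 1 ∧
  (∀ i j : ℕ, i ≤ j → σ j ≤ σ i) ∧ (∀ i, 0 ≤ σ i) ∧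
  (∀ i, min n d ≤ i → σ i = 0) ∧
  A = U * (Matrix.of fun (i : Fin n) (j : Fin d) => if (i : ℕ) = (j : ℕ) then σ (i : ℕ) else 0) * Vᵀ

/-- The first `k` columns of a square matrix `U` (e.g. the top-`k` left singular vectors). -/
def topCols {n k : ℕ} (U : Matrix (Fin n) (Fin n) ℝ) (hk : k ≤ n) :
    Matrix (Fin n) (Fin k) ℝ :=
  Matrix.of fun i j => U i (Fin.castLE hk j)

/-- The best rank-`k` approximation `A_k = U_k U_kᵀ A` of `A`. -/
def rankApprox {n d : ℕ} (k : ℕ) (A : Matrix (Fin n) (Fin d) ℝ)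
    (U : Matrix (Fin n) (Fin n) ℝ) (hk : k ≤ n) : Matrix (Fin n) (Fin d) ℝ :=
  topCols U hk * (topCols U hk)ᵀ * A

/-- The law of a vector in `ℝⁿ` with i.i.d. standard Gaussian entries. -/
def stdGaussian (n : ℕ) : Measure (Fin n → ℝ) :=
  Measure.pi fun _ => gaussianReal 0 1

/-- The law of an `n × b` matrix with i.i.d. standard Gaussian entries. -/
def stdGaussianMat (n b : ℕ) : Measure (Fin n → Fin b → ℝ) :=
  Measure.pi fun _ => Measure.pi fun _ => gaussianReal 0 1

/-- `U'` consists of `k` top (unit-norm, mutually orthogonal) eigenvectors of the symmetric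
matrix `M`: the first `k` columns of an orthogonal eigenbasis whose eigenvalues are sorted
in decreasing order. -/
def IsTopEigenvectors {m k : ℕ} (M : Matrix (Fin m) (Fin m) ℝ)
    (U' : Matrix (Fin m) (Fin k) ℝ) : Prop :=
  ∃ (W : Matrix (Fin m) (Fin m) ℝ) (μ : Fin m → ℝ) (hk : k ≤ m),
    Wᵀ * W = 1 ∧ (∀ i j : Fin m, i ≤ j → μ j ≤ μ i) ∧
    M = W * Matrix.diagonal μ * Wᵀ ∧
    U' = Matrix.of fun i j => W i (Fin.castLE hk j)

/-- `Q` is a possible output of the single vector Krylov method (Algorithm 1) on `A` with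
target rank `k`, starting vector `x` and `t` iterations. -/
def IsKrylovOutput {n d k : ℕ} (A : Matrix (Fin n) (Fin d) ℝ) (t : ℕ)
    (x : Fin n → ℝ) (Q : Matrix (Fin n) (Fin k) ℝ) : Prop :=
  ∃ (m : ℕ) (Z : Matrix (Fin n) (Fin m) ℝ) (U' : Matrix (Fin m) (Fin k) ℝ),
    Zᵀ * Z = 1 ∧
    colSpan Z = Submodule.span ℝ
      {v : Fin n → ℝ | ∃ j ≤ t, v = ((A * Aᵀ) ^ j).mulVec x} ∧
    IsTopEigenvectors (Zᵀ * (A * Aᵀ) * Z) U' ∧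
    Q = Z * U'

/-- `Q` is a possible output of the block Krylov method (Algorithm 2) on `A` with
target rank `k`, starting block `B` and `t` iterations. -/
def IsBlockKrylovOutput {n d k b : ℕ} (A : Matrix (Fin n) (Fin d) ℝ) (t : ℕ)
    (B : Matrix (Fin n) (Fin b) ℝ) (Q : Matrix (Fin n) (Fin k) ℝ) : Prop :=
  ∃ (m : ℕ) (Z : Matrix (Fin n) (Fin m) ℝ) (U' : Matrix (Fin m) (Fin k) ℝ),
    Zᵀ * Z = 1 ∧
    colSpan Z = Submodule.span ℝ
      {v : Fin n → ℝ | ∃ j ≤ t, ∃ c : Fin b, v = ((A * Aᵀ) ^ j).mulVec (fun i => B i c)} ∧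
    IsTopEigenvectors (Zᵀ * (A * Aᵀ) * Z) U' ∧
    Q = Z * U'

/-- `Q` is a possible output of single vector simultaneous iteration on `A` with
target rank `k`, starting vector `x`, `t` iterations, and memory budget `ℓ`. -/
def IsSimIterOutput {n d k : ℕ} (A : Matrix (Fin n) (Fin d) ℝ) (t ℓ : ℕ)
    (x : Fin n → ℝ) (Q : Matrix (Fin n) (Fin k) ℝ) : Prop :=
  ∃ (m : ℕ) (Z : Matrix (Fin n) (Fin m) ℝ) (U' : Matrix (Fin m) (Fin k) ℝ),
    Zᵀ * Z = 1 ∧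
    colSpan Z = Submodule.span ℝ
      {v : Fin n → ℝ | ∃ j, t - ℓ + 1 ≤ j ∧ j ≤ t ∧ v = ((A * Aᵀ) ^ j).mulVec x} ∧
    IsTopEigenvectors (Zᵀ * (A * Aᵀ) * Z) U' ∧
    Q = Z * U'

/-- `B` is a `(k,L)`-good starting matrix for a matrix with top-`k` left singular
vectors `Uk` (Definition 2.1 / `def:lgood`). -/
def IsGoodStart {n k : ℕ} (Uk : Matrix (Fin n) (Fin k) ℝ)
    (B : Matrix (Fin n) (Fin k) ℝ) (L : ℝ) : Prop :=
  ∃ Q : Matrix (Fin n) (Fin k) ℝ, Qᵀ * Q = 1 ∧ colSpan Q = colSpan B ∧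
    IsUnit (Ukᵀ * Q) ∧ specNorm ((Ukᵀ * Q)⁻¹) ^ 2 ≤ L

/-- Generalized `(k,L)`-good starting matrix (Definition `def:lgood-small-block`):
`B` may have any number of columns; some orthonormal `Q` with columns inside the column
span of `B` has `UkᵀQ` invertible with `‖(UkᵀQ)⁻¹‖₂² ≤ L`. -/
def IsGoodStartGen {n k : ℕ} {m : Type*} [Fintype m] (Uk : Matrix (Fin n) (Fin k) ℝ)
    (B : Matrix (Fin n) m ℝ) (L : ℝ) : Prop :=
  ∃ Q : Matrix (Fin n) (Fin k) ℝ, Qᵀ * Q = 1 ∧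
    (∀ j : Fin k, (fun i => Q i j) ∈ colSpan B) ∧
    IsUnit (Ukᵀ * Q) ∧ specNorm ((Ukᵀ * Q)⁻¹) ^ 2 ≤ L

/-- Schatten `p`-norm of a matrix: `(∑ i σ_i(M)^p)^(1/p)`, where the singular values are
the square roots of the eigenvalues of `M Mᵀ`. -/
def schattenNorm {n d : ℕ} (M : Matrix (Fin n) (Fin d) ℝ) (p : ℝ) : ℝ :=
  (∑ i, Real.sqrt ((Matrix.isHermitian_mul_conjTranspose_self M).eigenvalues i) ^ p) ^ (1 / p)


section AuxLemmas

lemma l2norm_nonneg {n : ℕ} (v : Fin n → ℝ) : 0 ≤ l2norm v := Real.sqrt_nonneg _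

lemma l2norm_sq {n : ℕ} (v : Fin n → ℝ) : l2norm v ^ 2 = v ⬝ᵥ v := by
  rw [l2norm, Real.sq_sqrt (by positivity)]
  simp [dotProduct, sq]

lemma l2norm_eq_norm {n : ℕ} (v : Fin n → ℝ) :
    l2norm v = ‖(WithLp.equiv 2 (Fin n → ℝ)).symm v‖ := by
  rw [EuclideanSpace.norm_eq]
  simp [l2norm, Real.norm_eq_abs, sq_abs]

lemma l2norm_add_le {n : ℕ} (v w : Fin n → ℝ) : l2norm (v + w) ≤ l2norm v + l2norm w := by
  simpa [l2norm_eq_norm] using norm_add_le ((WithLp.equiv 2 (Fin n → ℝ)).symm v) ((WithLp.equiv 2 (Fin n → ℝ)).symm w)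

lemma l2norm_smul {n : ℕ} (c : ℝ) (v : Fin n → ℝ) : l2norm (c • v) = |c| * l2norm v := by
  simpa [l2norm_eq_norm, Real.norm_eq_abs] using norm_smul c ((WithLp.equiv 2 (Fin n → ℝ)).symm v)

lemma l2norm_pos {n : ℕ} {v : Fin n → ℝ} (h : v ≠ 0) : 0 < l2norm v := by
  rw [l2norm_eq_norm]
  simpa using h

lemma l2norm_neg {n : ℕ} (v : Fin n → ℝ) : l2norm (-v) = l2norm v := by
  simp [l2norm_eq_norm]

lemma dot_le_l2norm {n : ℕ} (v w : Fin n → ℝ) : v ⬝ᵥ w ≤ l2norm v * l2norm w := by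
  simpa [l2norm, dotProduct] using Real.sum_mul_le_sqrt_mul_sqrt Finset.univ v w

lemma l2norm_le_of_sq_le_sq {n : ℕ} {v : Fin n → ℝ} {c : ℝ} (hc : 0 ≤ c)
    (h : l2norm v ^ 2 ≤ c ^ 2) : l2norm v ≤ c := by
  nlinarith [l2norm_nonneg v]

/-- Frobenius-type bound giving boundedness of the spec norm set. -/
lemma l2norm_mulVec_le_frob {n d : ℕ} (M : Matrix (Fin n) (Fin d) ℝ) (v : Fin d → ℝ) :
    l2norm (M *ᵥ v) ≤ Real.sqrt (∑ i, ∑ j, M i j ^ 2) * l2norm v := by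
  apply l2norm_le_of_sq_le_sq (mul_nonneg (Real.sqrt_nonneg _) (l2norm_nonneg v))
  rw [l2norm_sq, mul_pow, Real.sq_sqrt (by positivity), l2norm_sq]
  have : ∀ i : Fin n, (M *ᵥ v) i * (M *ᵥ v) i ≤ (∑ j, M i j ^ 2) * (v ⬝ᵥ v) := by
    intro i
    have h := Finset.sum_mul_sq_le_sq_mul_sq Finset.univ (M i) v
    simpa [mulVec, dotProduct, sq] using h
  calc (M *ᵥ v) ⬝ᵥ (M *ᵥ v) = ∑ i, (M *ᵥ v) i * (M *ᵥ v) i := rfl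
    _ ≤ ∑ i, (∑ j, M i j ^ 2) * (v ⬝ᵥ v) := Finset.sum_le_sum fun i _ => this i
    _ = (∑ i, ∑ j, M i j ^ 2) * (v ⬝ᵥ v) := by rw [Finset.sum_mul]

lemma specNorm_set_nonempty {n d : ℕ} (M : Matrix (Fin n) (Fin d) ℝ) :
    (0:ℝ) ∈ {c : ℝ | ∃ v : Fin d → ℝ, l2norm v ≤ 1 ∧ c = l2norm (M.mulVec v)} := by
  refine ⟨0, ?_, ?_⟩ <;> simp [l2norm]

lemma specNorm_set_bdd {n d : ℕ} (M : Matrix (Fin n) (Fin d) ℝ) :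
    BddAbove {c : ℝ | ∃ v : Fin d → ℝ, l2norm v ≤ 1 ∧ c = l2norm (M.mulVec v)} := by
  refine ⟨Real.sqrt (∑ i, ∑ j, M i j ^ 2), ?_⟩
  rintro c ⟨v, hv, rfl⟩
  calc l2norm (M *ᵥ v) ≤ Real.sqrt (∑ i, ∑ j, M i j ^ 2) * l2norm v := l2norm_mulVec_le_frob M v
    _ ≤ Real.sqrt (∑ i, ∑ j, M i j ^ 2) * 1 := by
        exact mul_le_mul_of_nonneg_left hv (Real.sqrt_nonneg _)
    _ = _ := mul_one _

lemma specNorm_nonneg {n d : ℕ} (M : Matrix (Fin n) (Fin d) ℝ) : 0 ≤ specNorm M :=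
  le_csSup (specNorm_set_bdd M) (specNorm_set_nonempty M)

lemma l2norm_mulVec_le {n d : ℕ} (M : Matrix (Fin n) (Fin d) ℝ) (v : Fin d → ℝ) :
    l2norm (M *ᵥ v) ≤ specNorm M * l2norm v := by
  rcases eq_or_ne v 0 with rfl | hv
  · simp [l2norm]
  · have hpos := l2norm_pos hv
    have hu : l2norm ((l2norm v)⁻¹ • v) = 1 := by
      rw [l2norm_smul, abs_of_pos (by positivity)]
      field_simp
    have hmem : l2norm (M *ᵥ ((l2norm v)⁻¹ • v)) ∈
        {c : ℝ | ∃ w : Fin d → ℝ, l2norm w ≤ 1 ∧ c = l2norm (M.mulVec w)} :=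
      ⟨_, le_of_eq hu, rfl⟩
    have hle := le_csSup (specNorm_set_bdd M) hmem
    have hMsmul : M *ᵥ ((l2norm v)⁻¹ • v) = (l2norm v)⁻¹ • (M *ᵥ v) := by
      rw [Matrix.mulVec_smul]
    rw [hMsmul, l2norm_smul, abs_of_pos (by positivity)] at hle
    calc l2norm (M *ᵥ v) = l2norm v * ((l2norm v)⁻¹ * l2norm (M *ᵥ v)) := by field_simp
      _ ≤ l2norm v * specNorm M := mul_le_mul_of_nonneg_left hle (le_of_lt hpos)
      _ = specNorm M * l2norm v := mul_comm _ _

lemma specNorm_neg {n d : ℕ} (M : Matrix (Fin n) (Fin d) ℝ) : specNorm (-M) = specNorm M := by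
  unfold specNorm
  congr 1
  ext c
  constructor <;> rintro ⟨v, hv, rfl⟩ <;> exact ⟨v, hv, by simp [Matrix.neg_mulVec, l2norm_neg]⟩

lemma l2norm_eq_sqrt_dot {n : ℕ} (v : Fin n → ℝ) : l2norm v = Real.sqrt (v ⬝ᵥ v) := by
  rw [← l2norm_sq, Real.sqrt_sq (l2norm_nonneg v)]

lemma dot_mulVec_eq {n d : ℕ} (M : Matrix (Fin n) (Fin d) ℝ) (v : Fin n → ℝ) (w : Fin d → ℝ) :
    v ⬝ᵥ (M *ᵥ w) = (Mᵀ *ᵥ v) ⬝ᵥ w := by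
  rw [Matrix.dotProduct_mulVec, Matrix.mulVec_transpose]

lemma orth_l2norm {n m : ℕ} {U : Matrix (Fin n) (Fin m) ℝ} (hU : Uᵀ * U = 1)
    (x : Fin m → ℝ) : l2norm (U *ᵥ x) = l2norm x := by
  rw [l2norm_eq_sqrt_dot, l2norm_eq_sqrt_dot x]
  congr 1
  rw [dot_mulVec_eq, Matrix.mulVec_mulVec, hU, Matrix.one_mulVec]

lemma isUnit_of_orth {n : ℕ} {V : Matrix (Fin n) (Fin n) ℝ} (hV : Vᵀ * V = 1) : IsUnit V := by
  have h2 : V * Vᵀ = 1 := mul_eq_one_comm.mp hV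
  exact ⟨⟨V, Vᵀ, h2, hV⟩, rfl⟩

lemma span_support {n : ℕ} {ι : Type*} {V : Matrix (Fin n) (Fin n) ℝ} (hV : Vᵀ * V = 1)
    (e : ι → Fin n) {v : Fin n → ℝ}
    (hv : v ∈ Submodule.span ℝ (Set.range fun m => fun i => V i (e m)))
    (l : Fin n) (hl : ∀ m, e m ≠ l) : (Vᵀ *ᵥ v) l = 0 := by
  induction hv using Submodule.span_induction with
  | mem w hw =>
      obtain ⟨m, rfl⟩ := hw
      have : (Vᵀ *ᵥ fun i => V i (e m)) l = (Vᵀ * V) l (e m) := by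
        simp [Matrix.mulVec, Matrix.mul_apply, dotProduct]
      rw [this, hV]
      simp [Matrix.one_apply, (hl m).symm]
  | zero => simp
  | add x y _ _ hx hy => rw [Matrix.mulVec_add]; simp [hx, hy]
  | smul c x _ hx => rw [Matrix.mulVec_smul]; simp [hx]

lemma diag_mulVec {n : ℕ} (σ : ℕ → ℝ) (c : Fin n → ℝ) (i : Fin n) :
    ((Matrix.of fun (i : Fin n) (j : Fin n) => if (i : ℕ) = (j : ℕ) then σ (i : ℕ) else 0) *ᵥ c) i
      = σ (i : ℕ) * c i := by
  simp only [Matrix.mulVec, dotProduct, Matrix.of_apply, Fin.val_eq_val]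
  simp [Finset.sum_ite_eq]

lemma svd_mulVec_norm {n : ℕ} {A U V : Matrix (Fin n) (Fin n) ℝ} {σ : ℕ → ℝ}
    (hA : IsSVD A U V σ) (v : Fin n → ℝ) :
    l2norm (A *ᵥ v) ^ 2 = ∑ i : Fin n, (σ (i:ℕ) * (Vᵀ *ᵥ v) i) ^ 2 := by
  obtain ⟨hU, hV, hmono, hpos, hzero, hfac⟩ := hA
  have : A *ᵥ v = U *ᵥ ((Matrix.of fun (i : Fin n) (j : Fin n) =>
      if (i : ℕ) = (j : ℕ) then σ (i : ℕ) else 0) *ᵥ (Vᵀ *ᵥ v)) := by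
    rw [hfac, Matrix.mulVec_mulVec, Matrix.mulVec_mulVec]
  rw [this, orth_l2norm hU, l2norm, Real.sq_sqrt (by positivity)]
  exact Finset.sum_congr rfl fun i _ => by rw [diag_mulVec]

lemma l2norm_sq_of_coord {n : ℕ} {V : Matrix (Fin n) (Fin n) ℝ} (hV : Vᵀ * V = 1)
    (v : Fin n → ℝ) : l2norm v ^ 2 = ∑ i : Fin n, (Vᵀ *ᵥ v) i ^ 2 := by
  have h2 : V * Vᵀ = 1 := mul_eq_one_comm.mp hV
  have hv : v = V *ᵥ (Vᵀ *ᵥ v) := by rw [Matrix.mulVec_mulVec, h2, Matrix.one_mulVec]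
  conv_lhs => rw [hv]
  rw [orth_l2norm hV, l2norm, Real.sq_sqrt (by positivity)]

lemma svd_lower {n : ℕ} {A U V : Matrix (Fin n) (Fin n) ℝ} {σ : ℕ → ℝ}
    (hA : IsSVD A U V σ) (j : ℕ) (v : Fin n → ℝ)
    (hsupp : ∀ l : Fin n, j < (l:ℕ) → (Vᵀ *ᵥ v) l = 0) :
    σ j * l2norm v ≤ l2norm (A *ᵥ v) := by
  have hmono := hA.2.2.1
  have hpos := hA.2.2.2.1
  have hsq : (σ j * l2norm v) ^ 2 ≤ l2norm (A *ᵥ v) ^ 2 := by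
    rw [svd_mulVec_norm hA, mul_pow, l2norm_sq_of_coord hA.2.1, Finset.mul_sum]
    refine Finset.sum_le_sum fun i _ => ?_
    rcases le_or_gt (i:ℕ) j with h | h
    · rw [mul_pow]
      exact mul_le_mul_of_nonneg_right (pow_le_pow_left₀ (hpos j) (hmono _ _ h) 2) (sq_nonneg _)
    · rw [hsupp i h]; simp
  nlinarith [l2norm_nonneg (A *ᵥ v), mul_nonneg (hpos j) (l2norm_nonneg v)]

lemma svd_upper {n : ℕ} {A U V : Matrix (Fin n) (Fin n) ℝ} {σ : ℕ → ℝ}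
    (hA : IsSVD A U V σ) (j : ℕ) (v : Fin n → ℝ)
    (hsupp : ∀ l : Fin n, (l:ℕ) < j → (Vᵀ *ᵥ v) l = 0) :
    l2norm (A *ᵥ v) ≤ σ j * l2norm v := by
  have hmono := hA.2.2.1
  have hpos := hA.2.2.2.1
  have hsq : l2norm (A *ᵥ v) ^ 2 ≤ (σ j * l2norm v) ^ 2 := by
    rw [svd_mulVec_norm hA, mul_pow, l2norm_sq_of_coord hA.2.1, Finset.mul_sum]
    refine Finset.sum_le_sum fun i _ => ?_
    rcases le_or_gt j (i:ℕ) with h | h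
    · rw [mul_pow]
      exact mul_le_mul_of_nonneg_right (pow_le_pow_left₀ (hpos _) (hmono _ _ h) 2) (sq_nonneg _)
    · rw [hsupp i h]; simp
  nlinarith [l2norm_nonneg (A *ᵥ v), mul_nonneg (hpos j) (l2norm_nonneg v)]

lemma weyl {n : ℕ} {A B U V U' V' : Matrix (Fin n) (Fin n) ℝ} {σ τ : ℕ → ℝ}
    (hA : IsSVD A U V σ) (hB : IsSVD B U' V' τ) (j : ℕ) (hj : j < n) :
    τ j ≤ σ j + specNorm (B - A) := by
  have hj1 : j + 1 ≤ n := hj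
  set e₁ : Fin (j+1) → Fin n := fun m => Fin.castLE hj1 m with he₁
  set e₂ : Fin (n-j) → Fin n := fun m => ⟨j + (m:ℕ), by omega⟩ with he₂
  set f₁ : Fin (j+1) → (Fin n → ℝ) := fun m => fun i => V' i (e₁ m) with hf₁
  set f₂ : Fin (n-j) → (Fin n → ℝ) := fun m => fun i => V i (e₂ m) with hf₂
  set S₁ := Submodule.span ℝ (Set.range f₁) with hS₁
  set S₂ := Submodule.span ℝ (Set.range f₂) with hS₂
  have hli1 : LinearIndependent ℝ f₁ := by
    have := (Matrix.linearIndependent_cols_iff_isUnit.2 (isUnit_of_orth hB.2.1)).comp e₁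
      (Fin.castLE_injective hj1)
    exact this
  have hli2 : LinearIndependent ℝ f₂ := by
    have hinj : Function.Injective e₂ := by
      intro a b hab
      have : j + (a:ℕ) = j + (b:ℕ) := congrArg Fin.val hab
      exact Fin.ext (by omega)
    exact (Matrix.linearIndependent_cols_iff_isUnit.2 (isUnit_of_orth hA.2.1)).comp e₂ hinj
  have hr1 : Module.finrank ℝ S₁ = j + 1 := by
    rw [hS₁, finrank_span_eq_card hli1, Fintype.card_fin]
  have hr2 : Module.finrank ℝ S₂ = n - j := by
    rw [hS₂, finrank_span_eq_card hli2, Fintype.card_fin]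
  have hsum := Submodule.finrank_sup_add_finrank_inf_eq S₁ S₂
  have htop : Module.finrank ℝ (S₁ ⊔ S₂ : Submodule ℝ (Fin n → ℝ)) ≤ n := by
    have := Submodule.finrank_le (S₁ ⊔ S₂)
    simpa [Module.finrank_fintype_fun_eq_card] using this
  have hinf : 0 < Module.finrank ℝ (S₁ ⊓ S₂ : Submodule ℝ (Fin n → ℝ)) := by omega
  have hne : (S₁ ⊓ S₂ : Submodule ℝ (Fin n → ℝ)) ≠ ⊥ := by
    intro h
    rw [h, finrank_bot] at hinf
    exact lt_irrefl 0 hinf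
  obtain ⟨v, hv, hv0⟩ := Submodule.exists_mem_ne_zero_of_ne_bot hne
  have hv1 : v ∈ S₁ := hv.1
  have hv2 : v ∈ S₂ := hv.2
  have hsupp1 : ∀ l : Fin n, j < (l:ℕ) → (V'ᵀ *ᵥ v) l = 0 := by
    intro l hl
    refine span_support hB.2.1 e₁ hv1 l fun m => ?_
    intro h
    have : ((e₁ m : Fin n) : ℕ) = (l:ℕ) := congrArg Fin.val h
    simp only [he₁, Fin.coe_castLE] at this
    omega
  have hsupp2 : ∀ l : Fin n, (l:ℕ) < j → (Vᵀ *ᵥ v) l = 0 := by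
    intro l hl
    refine span_support hA.2.1 e₂ hv2 l fun m => ?_
    intro h
    have : ((e₂ m : Fin n) : ℕ) = (l:ℕ) := congrArg Fin.val h
    simp only [he₂] at this
    omega
  have h1 := svd_lower hB j v hsupp1
  have h2 := svd_upper hA j v hsupp2
  have h3 : l2norm (B *ᵥ v) ≤ l2norm (A *ᵥ v) + l2norm ((B - A) *ᵥ v) := by
    have : B *ᵥ v = A *ᵥ v + (B - A) *ᵥ v := by
      rw [← Matrix.add_mulVec, add_sub_cancel]
    rw [this]
    exact l2norm_add_le _ _
  have h4 := l2norm_mulVec_le (B - A) v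
  have hp : 0 < l2norm v := l2norm_pos hv0
  have : τ j * l2norm v ≤ (σ j + specNorm (B - A)) * l2norm v := by
    calc τ j * l2norm v ≤ l2norm (B *ᵥ v) := h1
      _ ≤ l2norm (A *ᵥ v) + l2norm ((B - A) *ᵥ v) := h3
      _ ≤ σ j * l2norm v + specNorm (B - A) * l2norm v := add_le_add h2 h4
      _ = (σ j + specNorm (B - A)) * l2norm v := by ring
  exact le_of_mul_le_mul_right this hp


end AuxLemmas

set_option maxHeartbeats 1000000 in
/-- Lemma `lem:perturbed-correctness`, part 1: if `Ã = A + D` with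
`‖D‖₂ ≤ (ε/(3n))·σ_{k+1}(A)` and `Q` has orthonormal columns, then the singular value
guarantee for `Ã` transfers to `A`:
`|q_iᵀÃÃᵀq_i - σ_i(Ã)²| ≤ ε·σ_{k+1}(Ã)²` implies `|q_iᵀAAᵀq_i - σ_i(A)²| ≤ 8ε·σ_i(A)²`.
Singular values are given by SVD witnesses (0-indexed: `σ (i-1)` is `σ_i`). -/
theorem perturbed_singular_value_guarantee (n k : ℕ) (hk : 1 ≤ k) (hkn : k ≤ n)
    (A D : Matrix (Fin n) (Fin n) ℝ) (ε : ℝ) (hε : ε ∈ Set.Ioo (0 : ℝ) 1)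
    (UA VA : Matrix (Fin n) (Fin n) ℝ) (σA : ℕ → ℝ) (hA : IsSVD A UA VA σA)
    (Ut Vt : Matrix (Fin n) (Fin n) ℝ) (σt : ℕ → ℝ) (ht : IsSVD (A + D) Ut Vt σt)
    (hD : specNorm D ≤ ε / (3 * n) * σA k)
    (Q : Matrix (Fin n) (Fin k) ℝ) (hQ : Qᵀ * Q = 1) (i : Fin k)
    (hi : |(fun r => Q r i) ⬝ᵥ (((A + D) * (A + D)ᵀ).mulVec fun r => Q r i) - σt (i : ℕ) ^ 2|
        ≤ ε * σt k ^ 2) :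
    |(fun r => Q r i) ⬝ᵥ ((A * Aᵀ).mulVec fun r => Q r i) - σA (i : ℕ) ^ 2|
      ≤ 8 * ε * σA (i : ℕ) ^ 2 := by
  obtain ⟨hε0, hε1⟩ := hε
  set q : Fin n → ℝ := fun r => Q r i with hq_def
  -- q is a unit vector
  have hq1 : l2norm q = 1 := by
    have h1 : (Qᵀ * Q) i i = (1 : Matrix (Fin k) (Fin k) ℝ) i i := by rw [hQ]
    rw [Matrix.mul_apply, Matrix.one_apply_eq] at h1
    have : ∑ r, q r ^ 2 = 1 := by
      rw [← h1]; exact Finset.sum_congr rfl fun r _ => by simp [hq_def, sq, Matrix.transpose_apply]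
    rw [l2norm, this, Real.sqrt_one]
  set a := l2norm (Aᵀ *ᵥ q) with ha_def
  set at' := l2norm ((A + D)ᵀ *ᵥ q) with hat_def
  set d := l2norm (Dᵀ *ᵥ q) with hd_def
  set δ := specNorm D with hδ_def
  set s := σA (i:ℕ) with hs_def
  set st := σt (i:ℕ) with hst_def
  set τ := σt k with hτ_def
  have hδ0 : 0 ≤ δ := specNorm_nonneg D
  have hs0 : 0 ≤ s := hA.2.2.2.1 _
  have hst0 : 0 ≤ st := ht.2.2.2.1 _
  have hτ0 : 0 ≤ τ := ht.2.2.2.1 _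
  have ha0 : 0 ≤ a := l2norm_nonneg _
  have hat0 : 0 ≤ at' := l2norm_nonneg _
  have hd0 : 0 ≤ d := l2norm_nonneg _
  -- quadratic forms
  have hquadA : q ⬝ᵥ ((A * Aᵀ) *ᵥ q) = a ^ 2 := by
    rw [← Matrix.mulVec_mulVec, dot_mulVec_eq, ← l2norm_sq]
  have hquadt : q ⬝ᵥ (((A + D) * (A + D)ᵀ) *ᵥ q) = at' ^ 2 := by
    rw [← Matrix.mulVec_mulVec, dot_mulVec_eq, ← l2norm_sq]
  -- d ≤ δ
  have hdδ : d ≤ δ := by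
    have hsq : d ^ 2 ≤ δ * d := by
      rw [l2norm_sq]
      calc (Dᵀ *ᵥ q) ⬝ᵥ (Dᵀ *ᵥ q) = q ⬝ᵥ (D *ᵥ (Dᵀ *ᵥ q)) := (dot_mulVec_eq D q _).symm
        _ ≤ l2norm q * l2norm (D *ᵥ (Dᵀ *ᵥ q)) := dot_le_l2norm _ _
        _ = l2norm (D *ᵥ (Dᵀ *ᵥ q)) := by rw [hq1, one_mul]
        _ ≤ specNorm D * l2norm (Dᵀ *ᵥ q) := l2norm_mulVec_le _ _
        _ = δ * d := rfl
    rcases eq_or_lt_of_le hd0 with h | h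
    · rw [← h]; exact hδ0
    · nlinarith
  -- triangle inequalities between a and at'
  have htri1 : at' ≤ a + d := by
    have : (A + D)ᵀ *ᵥ q = Aᵀ *ᵥ q + Dᵀ *ᵥ q := by
      rw [Matrix.transpose_add, Matrix.add_mulVec]
    rw [hat_def, this]
    exact l2norm_add_le _ _
  have htri2 : a ≤ at' + d := by
    have : Aᵀ *ᵥ q = (A + D)ᵀ *ᵥ q + (-Dᵀ) *ᵥ q := by
      rw [Matrix.transpose_add, Matrix.add_mulVec, Matrix.neg_mulVec]
      abel
    rw [ha_def, this]
    calc l2norm ((A + D)ᵀ *ᵥ q + (-Dᵀ) *ᵥ q) ≤ at' + l2norm ((-Dᵀ) *ᵥ q) := l2norm_add_le _ _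
      _ = at' + d := by rw [Matrix.neg_mulVec, l2norm_neg]
  -- Weyl inequalities
  have hikn : (i:ℕ) < n := lt_of_lt_of_le i.isLt hkn
  have hw1 : st ≤ s + δ := by
    have := weyl hA ht (i:ℕ) hikn
    rwa [add_sub_cancel_left] at this
  have hw2 : s ≤ st + δ := by
    have hA' : IsSVD ((A + D) + (-D)) UA VA σA := by
      have : (A + D) + (-D) = A := by abel
      rwa [this]
    have := weyl ht hA' (i:ℕ) hikn
    have heq : (A + D + -D) - (A + D) = -D := by abel
    rwa [heq, specNorm_neg] at this
  have hw3 : τ ≤ s + δ := by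
    rcases lt_or_eq_of_le hkn with hkn' | hkn'
    · have := weyl hA ht k hkn'
      rw [add_sub_cancel_left] at this
      have hki : σA k ≤ s := hA.2.2.1 _ _ (le_of_lt i.isLt)
      linarith
    · have : τ = 0 := ht.2.2.2.2.1 k (by omega)
      rw [this]; positivity
  -- δ ≤ (ε/3) * s
  have hδs : δ ≤ ε / 3 * s := by
    have hn1 : (1:ℝ) ≤ (n:ℝ) := by exact_mod_cast Nat.one_le_iff_ne_zero.mpr (by omega)
    have hdiv : ε / (3 * n) ≤ ε / 3 :=
      div_le_div_of_nonneg_left (le_of_lt hε0) (by norm_num) (by linarith)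
    have hki : σA k ≤ s := hA.2.2.1 _ _ (le_of_lt i.isLt)
    have hk0 : 0 ≤ σA k := hA.2.2.2.1 _
    calc δ ≤ ε / (3 * n) * σA k := hD
      _ ≤ ε / 3 * σA k := mul_le_mul_of_nonneg_right hdiv hk0
      _ ≤ ε / 3 * s := mul_le_mul_of_nonneg_left hki (by positivity)
  -- use hypothesis hi
  rw [hquadt] at hi
  rw [hquadA]
  rw [abs_le] at hi ⊢
  obtain ⟨hi1, hi2⟩ := hi
  -- discard matrix-level facts; pure real arithmetic from here
  clear_value q a at' d δ s st τ
  clear hq1 hquadA hquadt hQ hD hA ht hq_def ha_def hat_def hd_def hδ_def hs_def hst_def hτ_def Q A D UA VA Ut Vt q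
  -- bound at' ≤ 2s
  have hδ3 : δ ≤ s / 3 := by nlinarith [hδs, hs0, hε1.le, hε0.le]
  have hsd : s + δ ≤ 4/3 * s := by linarith
  have hst2u : st ^ 2 ≤ (s + δ) ^ 2 := pow_le_pow_left₀ hst0 hw1 2
  have hτ2 : τ ^ 2 ≤ (s + δ) ^ 2 := pow_le_pow_left₀ hτ0 hw3 2
  have hsd2 : (s + δ) ^ 2 ≤ 16/9 * s ^ 2 := by
    have := pow_le_pow_left₀ (by linarith : (0:ℝ) ≤ s + δ) hsd 2
    nlinarith [this]
  have hat2 : at' ^ 2 ≤ 2 * (s + δ) ^ 2 := by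
    have h1 : ε * τ ^ 2 ≤ ε * (s + δ) ^ 2 := mul_le_mul_of_nonneg_left hτ2 hε0.le
    have h2 : ε * (s + δ) ^ 2 ≤ 1 * (s + δ) ^ 2 := mul_le_mul_of_nonneg_right hε1.le (sq_nonneg _)
    linarith [hi2, hst2u]
  have hat4 : at' ^ 2 ≤ 4 * s ^ 2 := by linarith [hsd2, sq_nonneg s]
  have hats : at' ≤ 2 * s := by nlinarith [hat4, hat0, hs0]
  -- monomial bounds
  have hsδ : s * δ ≤ ε * s ^ 2 / 3 := by nlinarith [mul_le_mul_of_nonneg_left hδs hs0]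
  have hδ2 : δ ^ 2 ≤ ε * s ^ 2 / 9 := by
    have := mul_le_mul hδs hδ3 hδ0 (by positivity : (0:ℝ) ≤ ε / 3 * s)
    nlinarith [this]
  have hd2 : d ^ 2 ≤ ε * s ^ 2 / 9 := le_trans (pow_le_pow_left₀ hd0 hdδ 2) hδ2
  have hετ : ε * τ ^ 2 ≤ 16/9 * (ε * s ^ 2) := by
    have h1 := mul_le_mul_of_nonneg_left (le_trans hτ2 hsd2) hε0.le
    linarith [h1]
  have hatd : at' * d ≤ 2 * (s * δ) := by
    have := mul_le_mul hats hdδ hd0 (by linarith : (0:ℝ) ≤ 2 * s)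
    linarith
  have ha2' : a ^ 2 ≤ at' ^ 2 + 2 * (at' * d) + d ^ 2 := by
    have := pow_le_pow_left₀ ha0 htri2 2
    linarith [this]
  have hεs2 : 0 ≤ ε * s ^ 2 := mul_nonneg hε0.le (sq_nonneg s)
  have hst2u' : st ^ 2 ≤ s ^ 2 + 2 * (s * δ) + δ ^ 2 := by linarith [hst2u]
  constructor
  · -- lower: -(8εs²) ≤ a² - s²
    have haub : a ≤ 2 * s + δ := by linarith
    have had : a * d ≤ 2 * (s * δ) + δ ^ 2 := by
      have := mul_le_mul haub hdδ hd0 (by linarith : (0:ℝ) ≤ 2 * s + δ)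
      linarith [this]
    have hstδ : st * δ ≤ s * δ + δ ^ 2 := by
      have := mul_le_mul_of_nonneg_right hw1 hδ0
      linarith [this]
    have hs2 : s ^ 2 ≤ st ^ 2 + 2 * (st * δ) + δ ^ 2 := by
      have := pow_le_pow_left₀ hs0 hw2 2
      linarith [this]
    have hat2l : at' ^ 2 ≤ a ^ 2 + 2 * (a * d) + d ^ 2 := by
      have := pow_le_pow_left₀ hat0 htri1 2
      linarith [this]
    linarith [hi1, hat2l, had, hstδ, hs2, hd2, hδ2, hsδ, hετ, hεs2]
  · -- upper: a² - s² ≤ 8εs²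
    linarith [hi2, ha2', hatd, hd2, hδ2, hετ, hst2u', hsδ, hεs2]


end
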